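/- For every t ∈ [0,1] and x ∈ C, the function T(t)x belongs to C; that is, 0 ≤ (T(t)x)(u) ≤ 1 for all u ∈ Ω and T(t)x is 1-Lipschitz on [0,∞). -/

import Mathlib

open Set

noncomputable section

/-- `Ω = {−1} ∪ [0,∞)`. -/
def Omega : Set ℝ := {-1} ∪ Set.Ici 0

/-- Membership in the set `C`: `x` takes values in `[0,1]` on `Ω`
and is 1-Lipschitz on `[0,∞)`. -/
def memC (x : ℝ → ℝ) : Prop :=
  (∀ u ∈ Omega, x u ∈ Set.Icc (0:ℝ) 1) ∧
  ∀ u₁ ∈ Set.Ici (0:ℝ), ∀ u₂ ∈ Set.Ici (0:ℝ), |x u₁ - x u₂| ≤ |u₁ - u₂|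

/-- `α_x(r) = sup { x s : s ∈ {−1} ∪ [r,∞) }`. -/
def alphaF (x : ℝ → ℝ) (r : ℝ) : ℝ := sSup (x '' ({-1} ∪ Set.Ici r))

/-- The semigroup map `T(t)` for `t ∈ [0,1]`:
`(T(t)x)(−1) = x(−1)`, `(T(t)x)(u) = x(u−t)` for `u ≥ t`, and for `0 ≤ u ≤ t`
the three-case definition via `α_x`. -/
def T (t : ℝ) (x : ℝ → ℝ) : ℝ → ℝ := fun u =>
  if u = -1 then x (-1)
  else if t ≤ u then x (u - t)
  else if 1 - alphaF x (1 - t + u) ≤ x 0 - t + u then x 0 - t + u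
  else if x 0 + t - u ≤ 1 - alphaF x (1 - t + u) then x 0 + t - u
  else 1 - alphaF x (1 - t + u)

/-- The supremum distance over `Ω`. -/
def supDist (x y : ℝ → ℝ) : ℝ := sSup ((fun u => |x u - y u|) '' Omega)

lemma subset_Omega' {r : ℝ} (hr : 0 ≤ r) : ({-1} ∪ Set.Ici r : Set ℝ) ⊆ Omega := by
  rintro s (hs | hs)
  · exact Or.inl hs
  · exact Or.inr (le_trans hr hs)

lemma bddAbove_aux' {x : ℝ → ℝ} (hx : memC x) {r : ℝ} (hr : 0 ≤ r) :
    BddAbove (x '' ({-1} ∪ Set.Ici r)) := by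
  refine ⟨1, ?_⟩
  rintro v ⟨s, hs, rfl⟩
  exact (hx.1 s (subset_Omega' hr hs)).2

lemma alpha_mem' {x : ℝ → ℝ} (hx : memC x) {r : ℝ} (hr : 0 ≤ r) :
    alphaF x r ∈ Set.Icc (0:ℝ) 1 := by
  constructor
  · have h1 : x (-1) ≤ alphaF x r := le_csSup (bddAbove_aux' hx hr) ⟨-1, Or.inl rfl, rfl⟩
    have h2 := (hx.1 (-1) (Or.inl rfl)).1
    linarith
  · exact csSup_le ⟨x (-1), mem_image_of_mem x (Or.inl rfl)⟩
      (by rintro v ⟨s, hs, rfl⟩; exact (hx.1 s (subset_Omega' hr hs)).2)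

lemma alpha_anti' {x : ℝ → ℝ} (hx : memC x) {r₁ r₂ : ℝ} (h0 : 0 ≤ r₁) (h : r₁ ≤ r₂) :
    alphaF x r₂ ≤ alphaF x r₁ :=
  csSup_le_csSup (bddAbove_aux' hx h0)
    ⟨x (-1), mem_image_of_mem x (Or.inl rfl)⟩
    (image_mono (union_subset_union subset_rfl (Ici_subset_Ici.2 h)))

lemma alpha_lip_le' {x : ℝ → ℝ} (hx : memC x) {r₁ r₂ : ℝ} (h0 : 0 ≤ r₁) (h : r₁ ≤ r₂) :
    alphaF x r₁ ≤ alphaF x r₂ + (r₂ - r₁) := by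
  apply csSup_le ⟨x (-1), mem_image_of_mem x (Or.inl rfl)⟩
  rintro v ⟨s, hs, rfl⟩
  have hb := bddAbove_aux' hx (h0.trans h)
  rcases hs with hs | hs
  · have h1 : x s ≤ alphaF x r₂ := le_csSup hb ⟨s, Or.inl hs, rfl⟩
    linarith
  · rcases le_or_gt r₂ s with h2 | h2
    · have h1 : x s ≤ alphaF x r₂ := le_csSup hb ⟨s, Or.inr h2, rfl⟩
      linarith
    · have hxr : x r₂ ≤ alphaF x r₂ := le_csSup hb ⟨r₂, Or.inr (le_refl r₂), rfl⟩
      have hs' : r₁ ≤ s := hs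
      have hlip := hx.2 s (le_trans h0 hs) r₂ (h0.trans h)
      have h4 : |s - r₂| ≤ r₂ - r₁ := by
        rw [abs_sub_comm, abs_of_nonneg (by linarith)]; linarith
      have h5 := (abs_le.1 (hlip.trans h4)).2
      linarith

lemma alpha_abs' {x : ℝ → ℝ} (hx : memC x) {r₁ r₂ : ℝ} (h₁ : 0 ≤ r₁) (h₂ : 0 ≤ r₂) :
    |alphaF x r₁ - alphaF x r₂| ≤ |r₁ - r₂| := by
  rcases le_total r₁ r₂ with h | h
  · rw [abs_sub_comm r₁ r₂, abs_of_nonneg (by linarith : (0:ℝ) ≤ r₂ - r₁)]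
    have h1 := alpha_anti' hx h₁ h
    have h2 := alpha_lip_le' hx h₁ h
    rw [abs_le]; constructor <;> linarith
  · rw [abs_of_nonneg (by linarith : (0:ℝ) ≤ r₁ - r₂)]
    have h1 := alpha_anti' hx h₂ h
    have h2 := alpha_lip_le' hx h₂ h
    rw [abs_le]; constructor <;> linarith

def gAux (t : ℝ) (x : ℝ → ℝ) (u : ℝ) : ℝ :=
  max (x 0 - t + u) (min (x 0 + t - u) (1 - alphaF x (1 - t + u)))

lemma T_eq_g' {t : ℝ} {x : ℝ → ℝ} {u : ℝ} (h0 : 0 ≤ u) (hut : u < t) :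
    T t x u = gAux t x u := by
  unfold T gAux
  rw [if_neg (by intro h; rw [h] at h0; linarith), if_neg (not_le.2 hut)]
  set A := 1 - alphaF x (1 - t + u) with hA
  by_cases h1 : A ≤ x 0 - t + u
  · rw [if_pos h1]
    exact (max_eq_left (le_trans (min_le_right _ _) h1)).symm
  · rw [if_neg h1]
    by_cases h2 : x 0 + t - u ≤ A
    · rw [if_pos h2, min_eq_left h2, max_eq_right (by linarith)]
    · rw [if_neg h2, min_eq_right (le_of_not_ge h2),
        max_eq_right (le_of_lt (not_le.1 h1))]

lemma g_at_t' {t : ℝ} {x : ℝ → ℝ} : gAux t x t = x 0 := by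
  unfold gAux
  rw [show x 0 - t + t = x 0 by ring, show x 0 + t - t = x 0 by ring]
  exact max_eq_left (min_le_left _ _)

lemma g_mem' {t : ℝ} (ht : t ∈ Set.Icc (0:ℝ) 1) {x : ℝ → ℝ} (hx : memC x)
    {u : ℝ} (h0 : 0 ≤ u) (hut : u ≤ t) : gAux t x u ∈ Set.Icc (0:ℝ) 1 := by
  have hr : (0:ℝ) ≤ 1 - t + u := by linarith [ht.2]
  have hα := alpha_mem' hx hr
  have hx0 := hx.1 0 (Or.inr (mem_Ici.2 (le_refl 0)))
  constructor
  · exact le_max_of_le_right (le_min (by linarith [hx0.1]) (by linarith [hα.2]))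
  · exact max_le (by linarith [hx0.2]) (le_trans (min_le_right _ _) (by linarith [hα.1]))

lemma g_lip' {t : ℝ} (ht : t ∈ Set.Icc (0:ℝ) 1) {x : ℝ → ℝ} (hx : memC x)
    {u₁ u₂ : ℝ} (h1 : 0 ≤ u₁) (_h1t : u₁ ≤ t) (h2 : 0 ≤ u₂) (_h2t : u₂ ≤ t) :
    |gAux t x u₁ - gAux t x u₂| ≤ |u₁ - u₂| := by
  have hr1 : (0:ℝ) ≤ 1 - t + u₁ := by linarith [ht.2]
  have hr2 : (0:ℝ) ≤ 1 - t + u₂ := by linarith [ht.2]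
  have hα : |alphaF x (1 - t + u₁) - alphaF x (1 - t + u₂)| ≤ |u₁ - u₂| := by
    have := alpha_abs' hx hr1 hr2
    rwa [show (1 - t + u₁) - (1 - t + u₂) = u₁ - u₂ by ring] at this
  have hB : |(x 0 - t + u₁) - (x 0 - t + u₂)| = |u₁ - u₂| := by ring_nf
  have hC : |(x 0 + t - u₁) - (x 0 + t - u₂)| = |u₁ - u₂| := by
    rw [show (x 0 + t - u₁) - (x 0 + t - u₂) = -(u₁ - u₂) by ring, abs_neg]
  have hA : |(1 - alphaF x (1 - t + u₁)) - (1 - alphaF x (1 - t + u₂))| ≤ |u₁ - u₂| := by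
    rw [show (1 - alphaF x (1 - t + u₁)) - (1 - alphaF x (1 - t + u₂)) =
      -(alphaF x (1 - t + u₁) - alphaF x (1 - t + u₂)) by ring, abs_neg]
    exact hα
  have hmin := abs_min_sub_min_le_max (x 0 + t - u₁) (1 - alphaF x (1 - t + u₁))
    (x 0 + t - u₂) (1 - alphaF x (1 - t + u₂))
  have hmax := abs_max_sub_max_le_max (x 0 - t + u₁)
    (min (x 0 + t - u₁) (1 - alphaF x (1 - t + u₁))) (x 0 - t + u₂)
    (min (x 0 + t - u₂) (1 - alphaF x (1 - t + u₂)))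
  unfold gAux
  refine hmax.trans (max_le (le_of_eq hB) (hmin.trans (max_le (le_of_eq hC) hA)))

lemma T_eq_shift' {t : ℝ} (ht0 : 0 ≤ t) {x : ℝ → ℝ} {u : ℝ} (h0 : 0 ≤ u) (htu : t ≤ u) :
    T t x u = x (u - t) := by
  unfold T
  rcases eq_or_lt_of_le h0 with h | h
  · rcases eq_or_lt_of_le ht0 with h' | h'
    · rw [if_neg (by intro hc; rw [hc] at h0; linarith), if_pos htu]
    · exfalso; rw [← h] at htu; linarith
  · rw [if_neg (by intro hc; rw [hc] at h; linarith), if_pos htu]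

lemma key_lip' {t : ℝ} (ht : t ∈ Set.Icc (0:ℝ) 1) {x : ℝ → ℝ} (hx : memC x)
    {u₁ u₂ : ℝ} (h1 : 0 ≤ u₁) (h12 : u₁ ≤ u₂) :
    |T t x u₁ - T t x u₂| ≤ u₂ - u₁ := by
  have h2 : 0 ≤ u₂ := h1.trans h12
  rcases le_or_gt t u₁ with hta | hta
  · rw [T_eq_shift' ht.1 h1 hta, T_eq_shift' ht.1 h2 (hta.trans h12)]
    have h5 := hx.2 (u₁ - t) (mem_Ici.2 (by linarith)) (u₂ - t) (mem_Ici.2 (by linarith))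
    refine h5.trans (le_of_eq ?_)
    rw [show (u₁ - t) - (u₂ - t) = -(u₂ - u₁) by ring, abs_neg]
    exact abs_of_nonneg (by linarith)
  · rcases le_or_gt t u₂ with htb | htb
    · rw [T_eq_g' h1 hta, T_eq_shift' ht.1 h2 htb]
      have ha : |gAux t x u₁ - x 0| ≤ t - u₁ := by
        have h6 := g_lip' ht hx h1 (le_of_lt hta) ht.1 le_rfl
        rw [g_at_t'] at h6
        refine h6.trans (le_of_eq ?_)
        rw [abs_of_nonpos (by linarith), neg_sub]
      have hb : |x 0 - x (u₂ - t)| ≤ u₂ - t := by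
        have h7 := hx.2 0 (mem_Ici.2 le_rfl) (u₂ - t) (mem_Ici.2 (by linarith))
        refine h7.trans (le_of_eq ?_)
        rw [zero_sub, abs_neg]
        exact abs_of_nonneg (by linarith)
      have htri := abs_sub_le (gAux t x u₁) (x 0) (x (u₂ - t))
      linarith
    · rw [T_eq_g' h1 hta, T_eq_g' h2 htb]
      have h8 := g_lip' ht hx h1 (le_of_lt hta) h2 (le_of_lt htb)
      refine h8.trans (le_of_eq ?_)
      rw [abs_of_nonpos (by linarith : u₁ - u₂ ≤ 0), neg_sub]

/-- for `t ∈ [0,1]` and `x ∈ C`, `T(t)x ∈ C`. -/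
theorem stmt_7 (t : ℝ) (ht : t ∈ Set.Icc (0:ℝ) 1) (x : ℝ → ℝ) (hx : memC x) :
    memC (T t x) := by
  constructor
  · rintro u (hu | hu)
    · rw [show u = -1 from hu]
      unfold T
      rw [if_pos rfl]
      exact hx.1 (-1) (Or.inl rfl)
    · simp only [mem_Ici] at hu
      rcases le_or_gt t u with h | h
      · rw [T_eq_shift' ht.1 hu h]
        exact hx.1 (u - t) (Or.inr (mem_Ici.2 (by linarith)))
      · rw [T_eq_g' hu h]
        exact g_mem' ht hx hu (le_of_lt h)
  · intro u₁ hu₁ u₂ hu₂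
    simp only [mem_Ici] at hu₁ hu₂
    rcases le_total u₁ u₂ with h | h
    · have hk := key_lip' ht hx hu₁ h
      have he : |u₁ - u₂| = u₂ - u₁ := by
        rw [abs_sub_comm]; exact abs_of_nonneg (by linarith)
      rw [he]; exact hk
    · have hk := key_lip' ht hx hu₂ h
      have he : |u₁ - u₂| = u₁ - u₂ := abs_of_nonneg (by linarith)
      rw [he, abs_sub_comm]; exact hk.trans (le_of_eq rfl)
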